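/- For every real q ≥ 1, the function F : [0,1/2] → ℝ defined by F(y) := ∫_0^{1/2} ( x^q |x−y|^q + (1/2−x)^q (1/2−|x−y|)^q ) dx (Lebesgue integral in x) is strictly decreasing on [0, 1/2]; in particular its derivative is negative at every y ∈ (0, 1/2). -/

import Mathlib

open MeasureTheory Set intervalIntegral

noncomputable section

/-- `F(y) = ∫_0^{1/2} ( x^q |x-y|^q + (1/2-x)^q (1/2-|x-y|)^q ) dx`. -/
def Ffun (q : ℝ) (y : ℝ) : ℝ :=
  ∫ x in Set.Icc (0:ℝ) (1/2),
    (x ^ q * |x - y| ^ q + (1/2 - x) ^ q * (1/2 - |x - y|) ^ q)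

noncomputable def Gf (q y x : ℝ) : ℝ := x ^ q * |x - y| ^ q + (1/2 - x) ^ q * (1/2 - |x - y|) ^ q

noncomputable def gder (q y x : ℝ) : ℝ :=
  (if y < x then (-1:ℝ) else 1) * q *
    (x ^ q * |x - y| ^ (q-1) - (1/2 - x) ^ q * (1/2 - |x - y|) ^ (q-1))

lemma cont_rpow {p : ℝ} (hp : 0 ≤ p) : Continuous fun t : ℝ => t ^ p := by
  rw [continuous_iff_continuousAt]
  intro x
  rcases eq_or_ne x 0 with h | h
  · exact Real.continuousAt_rpow_const x p (Or.inr hp)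
  · exact Real.continuousAt_rpow_const x p (Or.inl h)

lemma contexpr {p : ℝ} (hp : 0 ≤ p) {f : ℝ → ℝ} (hf : Continuous f) :
    Continuous fun u => f u ^ p := hf.rpow_const fun _ => Or.inr hp

lemma rpow_lip {q : ℝ} (hq : 1 ≤ q) {a b : ℝ} (ha : a ∈ Icc (0:ℝ) 1) (hb : b ∈ Icc (0:ℝ) 1) :
    |a ^ q - b ^ q| ≤ q * |a - b| := by
  have h := Convex.norm_image_sub_le_of_norm_hasDerivWithin_le
    (f := fun t : ℝ => t ^ q) (f' := fun t => q * t ^ (q - 1)) (C := q) (s := Icc (0:ℝ) 1)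
    (fun t ht => (Real.hasDerivAt_rpow_const (Or.inr hq)).hasDerivWithinAt)
    (fun t ht => by
      rw [Real.norm_eq_abs, abs_of_nonneg (mul_nonneg (by linarith) (Real.rpow_nonneg ht.1 _))]
      calc q * t ^ (q - 1) ≤ q * 1 := by
            gcongr
            exact Real.rpow_le_one ht.1 ht.2 (by linarith)
        _ = q := mul_one q)
    (convex_Icc 0 1) hb ha
  simpa [Real.norm_eq_abs] using h

lemma Glip {q : ℝ} (hq : 1 ≤ q) {x y₁ y₂ : ℝ} (hx : x ∈ Icc (0:ℝ) (1/2))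
    (hy₁ : y₁ ∈ Icc (0:ℝ) (1/2)) (hy₂ : y₂ ∈ Icc (0:ℝ) (1/2)) :
    |Gf q y₁ x - Gf q y₂ x| ≤ 2 * q * |y₁ - y₂| := by
  obtain ⟨hx0, hx2⟩ := hx
  obtain ⟨h10, h12⟩ := hy₁
  obtain ⟨h20, h22⟩ := hy₂
  have habs1 : |x - y₁| ∈ Icc (0:ℝ) 1 := ⟨abs_nonneg _, by rw [abs_le]; constructor <;> linarith⟩
  have habs2 : |x - y₂| ∈ Icc (0:ℝ) 1 := ⟨abs_nonneg _, by rw [abs_le]; constructor <;> linarith⟩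
  have habs1' : |x - y₁| ≤ 1/2 := by rw [abs_le]; constructor <;> linarith
  have habs2' : |x - y₂| ≤ 1/2 := by rw [abs_le]; constructor <;> linarith
  have hB1 : 1/2 - |x - y₁| ∈ Icc (0:ℝ) 1 := ⟨by linarith, by have := abs_nonneg (x - y₁); linarith⟩
  have hB2 : 1/2 - |x - y₂| ∈ Icc (0:ℝ) 1 := ⟨by linarith, by have := abs_nonneg (x - y₂); linarith⟩
  have hyy : abs (|x - y₁| - |x - y₂|) ≤ |y₁ - y₂| := by
    calc abs (|x - y₁| - |x - y₂|) ≤ |(x - y₁) - (x - y₂)| := abs_abs_sub_abs_le_abs_sub _ _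
      _ = |y₁ - y₂| := by rw [show (x - y₁) - (x - y₂) = -(y₁ - y₂) by ring, abs_neg]
  have key1 : abs (|x - y₁| ^ q - |x - y₂| ^ q) ≤ q * |y₁ - y₂| :=
    le_trans (rpow_lip hq habs1 habs2)
      (mul_le_mul_of_nonneg_left hyy (by linarith))
  have key2 : |(1/2 - |x - y₁|) ^ q - (1/2 - |x - y₂|) ^ q| ≤ q * |y₁ - y₂| := by
    refine le_trans (rpow_lip hq hB1 hB2) ?_
    have : |(1/2 - |x - y₁|) - (1/2 - |x - y₂|)| = abs (|x - y₂| - |x - y₁|) := by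
      rw [show (1/2 - |x - y₁|) - (1/2 - |x - y₂|) = |x - y₂| - |x - y₁| by ring]
    rw [this]
    have hq0 : (0:ℝ) ≤ q := by linarith
    refine mul_le_mul_of_nonneg_left ?_ hq0
    calc abs (|x - y₂| - |x - y₁|) ≤ |(x - y₂) - (x - y₁)| := abs_abs_sub_abs_le_abs_sub _ _
      _ = |y₁ - y₂| := by rw [show (x - y₂) - (x - y₁) = y₁ - y₂ by ring]
  have hx1 : x ^ q ≤ 1 := Real.rpow_le_one hx0 (by linarith) (by linarith)
  have hx1' : (0:ℝ) ≤ x ^ q := Real.rpow_nonneg hx0 _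
  have hx2' : (0:ℝ) ≤ (1/2 - x) ^ q := Real.rpow_nonneg (by linarith) _
  have hx2'' : (1/2 - x) ^ q ≤ 1 := Real.rpow_le_one (by linarith) (by linarith) (by linarith)
  have expand : Gf q y₁ x - Gf q y₂ x
      = x ^ q * (|x - y₁| ^ q - |x - y₂| ^ q)
        + (1/2 - x) ^ q * ((1/2 - |x - y₁|) ^ q - (1/2 - |x - y₂|) ^ q) := by
    simp only [Gf]; ring
  rw [expand]
  calc |x ^ q * (|x - y₁| ^ q - |x - y₂| ^ q)
        + (1/2 - x) ^ q * ((1/2 - |x - y₁|) ^ q - (1/2 - |x - y₂|) ^ q)|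
      ≤ |x ^ q * (|x - y₁| ^ q - |x - y₂| ^ q)|
        + |(1/2 - x) ^ q * ((1/2 - |x - y₁|) ^ q - (1/2 - |x - y₂|) ^ q)| := abs_add_le _ _
    _ = x ^ q * abs (|x - y₁| ^ q - |x - y₂| ^ q)
        + (1/2 - x) ^ q * |(1/2 - |x - y₁|) ^ q - (1/2 - |x - y₂|) ^ q| := by
        rw [abs_mul, abs_mul, abs_of_nonneg hx1', abs_of_nonneg hx2']
    _ ≤ 1 * (q * |y₁ - y₂|) + 1 * (q * |y₁ - y₂|) := by
        have b1 : x ^ q * abs (|x - y₁| ^ q - |x - y₂| ^ q) ≤ 1 * (q * |y₁ - y₂|) :=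
          mul_le_mul hx1 key1 (abs_nonneg _) zero_le_one
        have b2 : (1/2 - x) ^ q * |(1/2 - |x - y₁|) ^ q - (1/2 - |x - y₂|) ^ q| ≤ 1 * (q * |y₁ - y₂|) :=
          mul_le_mul hx2'' key2 (abs_nonneg _) zero_le_one
        exact add_le_add b1 b2
    _ = 2 * q * |y₁ - y₂| := by ring

lemma contGx {q : ℝ} (hq : 0 ≤ q) (y : ℝ) : Continuous fun x => Gf q y x := by
  unfold Gf
  have h1 : Continuous fun x : ℝ => x ^ q := cont_rpow hq
  have h2 : Continuous fun x : ℝ => |x - y| ^ q :=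
    ((continuous_id.sub continuous_const).abs).rpow_const (fun x => Or.inr hq)
  have h3 : Continuous fun x : ℝ => (1/2 - x) ^ q :=
    (continuous_const.sub continuous_id).rpow_const (fun x => Or.inr hq)
  have h4 : Continuous fun x : ℝ => (1/2 - |x - y|) ^ q :=
    (continuous_const.sub (continuous_id.sub continuous_const).abs).rpow_const (fun x => Or.inr hq)
  exact (h1.mul h2).add (h3.mul h4)

lemma Gderiv0 {q : ℝ} (hq : 1 ≤ q) {x y : ℝ} (hxy : x ≠ y) :
    HasDerivAt (fun z => Gf q z x)
      ((if y < x then (-1:ℝ) else 1) * q *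
        (x ^ q * |x - y| ^ (q-1) - (1/2 - x) ^ q * (1/2 - |x - y|) ^ (q-1))) y := by
  rcases hxy.lt_or_gt with hlt | hlt
  · -- x < y : |x - z| = z - x near y, A' = 1
    have hA0 : HasDerivAt (fun z : ℝ => z - x) 1 y := (hasDerivAt_id y).sub_const x
    have hev : (fun z : ℝ => |x - z|) =ᶠ[nhds y] fun z => z - x := by
      filter_upwards [Ioi_mem_nhds hlt] with z hz
      rw [abs_of_neg (by simpa using hz : x - z < 0)]; ring
    have hA : HasDerivAt (fun z : ℝ => |x - z|) 1 y := hA0.congr_of_eventuallyEq hev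
    have hAq : HasDerivAt (fun z : ℝ => |x - z| ^ q) (q * |x - y| ^ (q-1) * 1) y :=
      ((Real.hasDerivAt_rpow_const (x := |x - y|) (Or.inr hq)).comp y hA :)
    have hB : HasDerivAt (fun z : ℝ => 1/2 - |x - z|) (-1) y := by
      simpa only [neg_neg] using hA.const_sub (1/2)
    have hBq : HasDerivAt (fun z : ℝ => (1/2 - |x - z|) ^ q)
        (q * (1/2 - |x - y|) ^ (q-1) * (-1)) y :=
      ((Real.hasDerivAt_rpow_const (x := 1/2 - |x - y|) (Or.inr hq)).comp y hB :)
    have := (hAq.const_mul (x ^ q)).add (hBq.const_mul ((1/2 - x) ^ q))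
    refine this.congr_deriv ?_
    rw [if_neg (not_lt.mpr hlt.le)]; ring
  · -- y < x
    have hA0 : HasDerivAt (fun z : ℝ => x - z) (-1) y := by
      simpa using (hasDerivAt_id y).const_sub x
    have hev : (fun z : ℝ => |x - z|) =ᶠ[nhds y] fun z => x - z := by
      filter_upwards [Iio_mem_nhds hlt] with z hz
      rw [abs_of_pos (by simpa [sub_pos] using hz : (0:ℝ) < x - z)]
    have hA : HasDerivAt (fun z : ℝ => |x - z|) (-1) y := hA0.congr_of_eventuallyEq hev
    have hAq : HasDerivAt (fun z : ℝ => |x - z| ^ q) (q * |x - y| ^ (q-1) * (-1)) y :=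
      ((Real.hasDerivAt_rpow_const (x := |x - y|) (Or.inr hq)).comp y hA :)
    have hB : HasDerivAt (fun z : ℝ => 1/2 - |x - z|) 1 y := by
      simpa only [neg_neg] using hA.const_sub (1/2)
    have hBq : HasDerivAt (fun z : ℝ => (1/2 - |x - z|) ^ q)
        (q * (1/2 - |x - y|) ^ (q-1) * 1) y :=
      ((Real.hasDerivAt_rpow_const (x := 1/2 - |x - y|) (Or.inr hq)).comp y hB :)
    have := (hAq.const_mul (x ^ q)).add (hBq.const_mul ((1/2 - x) ^ q))
    refine this.congr_deriv ?_
    rw [if_pos hlt]; ring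

lemma Gderiv {q : ℝ} (hq : 1 ≤ q) {x y : ℝ} (hxy : x ≠ y) :
    HasDerivAt (fun z => Gf q z x) (gder q y x) y := Gderiv0 hq hxy

lemma contgder {q : ℝ} (hq : 1 ≤ q) (y : ℝ) :
    Continuous fun x : ℝ =>
      x ^ q * |x - y| ^ (q-1) - (1/2 - x) ^ q * (1/2 - |x - y|) ^ (q-1) := by
  have hq0 : (0:ℝ) ≤ q := by linarith
  have hq1 : (0:ℝ) ≤ q - 1 := by linarith
  exact ((cont_rpow hq0).mul
      (((continuous_id.sub continuous_const).abs).rpow_const fun _ => Or.inr hq1)).sub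
    (((continuous_const.sub continuous_id).rpow_const fun _ => Or.inr hq0).mul
      ((continuous_const.sub (continuous_id.sub continuous_const).abs).rpow_const
        fun _ => Or.inr hq1))

lemma main_deriv {q : ℝ} (hq : 1 ≤ q) {y₀ : ℝ} (hy₀ : y₀ ∈ Ioo (0:ℝ) (1/2)) :
    HasDerivAt (fun y => ∫ x in (0:ℝ)..(1/2), Gf q y x)
      (∫ x in (0:ℝ)..(1/2), gder q y₀ x) y₀ := by
  obtain ⟨hy0, hy2⟩ := hy₀
  have hq0 : (0:ℝ) ≤ q := by linarith
  set ε := min y₀ (1/2 - y₀) with hε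
  have hεpos : 0 < ε := lt_min hy0 (by linarith)
  have hball : Metric.ball y₀ ε ⊆ Icc (0:ℝ) (1/2) := by
    intro y hy
    rw [Metric.mem_ball, Real.dist_eq, abs_lt] at hy
    have h1 : ε ≤ y₀ := min_le_left _ _
    have h2 : ε ≤ 1/2 - y₀ := min_le_right _ _
    exact ⟨by linarith [hy.1], by linarith [hy.2]⟩
  have key := intervalIntegral.hasDerivAt_integral_of_dominated_loc_of_lip
    (F := fun y x => Gf q y x) (F' := gder q y₀) (x₀ := y₀) (a := 0) (b := 1/2)
    (μ := volume) (bound := fun _ => 2 * q) (Metric.ball_mem_nhds y₀ hεpos)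
    (Filter.Eventually.of_forall fun y => (contGx hq0 y).aestronglyMeasurable)
    ((contGx hq0 y₀).intervalIntegrable _ _)
    ?_ ?_ intervalIntegrable_const ?_
  · exact key.2
  · -- measurability of gder q y₀
    have m1 : Measurable fun x : ℝ => (if y₀ < x then (-1:ℝ) else 1) :=
      Measurable.ite (measurableSet_lt measurable_const measurable_id)
        measurable_const measurable_const
    exact (((m1.mul measurable_const).mul (contgder hq y₀).measurable)).aestronglyMeasurable
  · -- Lipschitz
    refine Filter.Eventually.of_forall fun x hx => ?_
    have hxmem : x ∈ Icc (0:ℝ) (1/2) := by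
      rw [Set.uIoc_of_le (by norm_num : (0:ℝ) ≤ 1/2)] at hx
      exact ⟨hx.1.le, hx.2⟩
    rw [lipschitzOnWith_iff_dist_le_mul]
    intro y₁ h₁ y₂ h₂
    rw [Real.dist_eq, Real.dist_eq]
    calc |Gf q y₁ x - Gf q y₂ x| ≤ 2 * q * |y₁ - y₂| :=
          Glip hq hxmem (hball h₁) (hball h₂)
      _ ≤ (Real.nnabs (2 * q) : ℝ) * |y₁ - y₂| := by
          rw [Real.coe_nnabs]
          exact mul_le_mul_of_nonneg_right (le_abs_self _) (abs_nonneg _)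
  · -- a.e. differentiability
    have hae : ∀ᵐ x : ℝ, x ≠ y₀ := by
      rw [MeasureTheory.ae_iff]
      have : {x : ℝ | ¬x ≠ y₀} = {y₀} := by ext z; simp
      rw [this]
      exact measure_singleton y₀
    filter_upwards [hae] with x hx _
    exact Gderiv hq hx

lemma gder_integral_neg {q : ℝ} (hq : 1 ≤ q) {y : ℝ} (hy : y ∈ Ioo (0:ℝ) (1/2)) :
    ∫ x in (0:ℝ)..(1/2), gder q y x < 0 := by
  obtain ⟨hy0, hy2⟩ := hy
  have hq0 : (0:ℝ) ≤ q := by linarith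
  have hq1 : (0:ℝ) ≤ q - 1 := by linarith
  -- continuous integrands
  have c1 : Continuous fun x : ℝ => x ^ q * (y - x) ^ (q-1) :=
    (contexpr hq0 continuous_id).mul (contexpr hq1 (continuous_const.sub continuous_id))
  have c2 : Continuous fun x : ℝ => (1/2 - x) ^ q * (1/2 - y + x) ^ (q-1) :=
    (contexpr hq0 (continuous_const.sub continuous_id)).mul
      (contexpr hq1 (continuous_const.add continuous_id))
  have c3 : Continuous fun x : ℝ => x ^ q * (x - y) ^ (q-1) :=
    (contexpr hq0 continuous_id).mul (contexpr hq1 (continuous_id.sub continuous_const))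
  have c4 : Continuous fun x : ℝ => (1/2 - x) ^ q * (1/2 - x + y) ^ (q-1) :=
    (contexpr hq0 (continuous_const.sub continuous_id)).mul
      (contexpr hq1 ((continuous_const.sub continuous_id).add continuous_const))
  have cabs : Continuous fun u : ℝ => |u - y| ^ q * u ^ (q-1) :=
    (contexpr hq0 (continuous_id.sub continuous_const).abs).mul (cont_rpow hq1)
  have cmin : Continuous fun u : ℝ => (min (u + y) (1 - u - y)) ^ q * u ^ (q-1) :=
    (contexpr hq0 ((continuous_id.add continuous_const).min
      ((continuous_const.sub continuous_id).sub continuous_const))).mul (cont_rpow hq1)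
  have cQ1 : Continuous fun u : ℝ => (u + y) ^ q * u ^ (q-1) :=
    (contexpr hq0 (continuous_id.add continuous_const)).mul (cont_rpow hq1)
  have cQ2 : Continuous fun u : ℝ => (y - u) ^ q * u ^ (q-1) :=
    (contexpr hq0 (continuous_const.sub continuous_id)).mul (cont_rpow hq1)
  have cQ3 : Continuous fun u : ℝ => (u - y) ^ q * u ^ (q-1) :=
    (contexpr hq0 (continuous_id.sub continuous_const)).mul (cont_rpow hq1)
  have cQ4 : Continuous fun u : ℝ => (1 - y - u) ^ q * u ^ (q-1) :=
    (contexpr hq0 ((continuous_const.sub continuous_id : Continuous fun u : ℝ => (1 - y : ℝ) - u))).mul (cont_rpow hq1)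
  -- pointwise descriptions of gder
  have e1 : ∀ x : ℝ, x ≤ y →
      gder q y x = q * (x ^ q * (y - x) ^ (q-1) - (1/2 - x) ^ q * (1/2 - y + x) ^ (q-1)) := by
    intro x hx
    have hax : |x - y| = y - x := by rw [abs_of_nonpos (by linarith)]; ring
    rw [gder, if_neg (not_lt.mpr hx), hax, one_mul,
      show (1:ℝ)/2 - (y - x) = 1/2 - y + x by ring]
  have e2 : ∀ x : ℝ, y < x →
      gder q y x = q * ((1/2 - x) ^ q * (1/2 - x + y) ^ (q-1) - x ^ q * (x - y) ^ (q-1)) := by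
    intro x hx
    have hax : |x - y| = x - y := abs_of_pos (by linarith)
    rw [gder, if_pos hx, hax, show (1:ℝ)/2 - (x - y) = 1/2 - x + y by ring]
    ring
  -- continuous versions on the two halves
  have g1c : Continuous fun x : ℝ =>
      q * (x ^ q * (y - x) ^ (q-1) - (1/2 - x) ^ q * (1/2 - y + x) ^ (q-1)) :=
    continuous_const.mul (c1.sub c2)
  have g2c : Continuous fun x : ℝ =>
      q * ((1/2 - x) ^ q * (1/2 - x + y) ^ (q-1) - x ^ q * (x - y) ^ (q-1)) :=
    continuous_const.mul (c4.sub c3)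
  -- integrability of gder on both halves
  have igder1 : IntervalIntegrable (gder q y) volume 0 y := by
    refine ((g1c.intervalIntegrable 0 y)).congr ?_
    refine fun x hx => ?_
    rw [uIoc_of_le hy0.le] at hx
    exact (e1 x hx.2).symm
  have igder2 : IntervalIntegrable (gder q y) volume y (1/2) := by
    refine ((g2c.intervalIntegrable y (1/2))).congr ?_
    refine fun x hx => ?_
    rw [uIoc_of_le hy2.le] at hx
    exact (e2 x hx.1).symm
  -- values on each half
  have val1 : ∫ x in (0:ℝ)..y, gder q y x
      = q * ((∫ x in (0:ℝ)..y, x ^ q * (y - x) ^ (q-1))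
          - ∫ x in (0:ℝ)..y, (1/2 - x) ^ q * (1/2 - y + x) ^ (q-1)) := by
    rw [intervalIntegral.integral_congr
      (g := fun x => q * (x ^ q * (y - x) ^ (q-1) - (1/2 - x) ^ q * (1/2 - y + x) ^ (q-1)))
      (fun x hx => by
        rw [uIcc_of_le hy0.le] at hx
        exact e1 x hx.2),
      intervalIntegral.integral_const_mul,
      intervalIntegral.integral_sub (c1.intervalIntegrable _ _) (c2.intervalIntegrable _ _)]
  have val2 : ∫ x in y..(1/2), gder q y x
      = q * ((∫ x in y..(1/2), (1/2 - x) ^ q * (1/2 - x + y) ^ (q-1))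
          - ∫ x in y..(1/2), x ^ q * (x - y) ^ (q-1)) := by
    rw [intervalIntegral.integral_congr_ae
      (g := fun x => q * ((1/2 - x) ^ q * (1/2 - x + y) ^ (q-1) - x ^ q * (x - y) ^ (q-1)))
      (.of_forall fun x hx => by
        rw [uIoc_of_le hy2.le] at hx
        exact e2 x hx.1),
      intervalIntegral.integral_const_mul,
      intervalIntegral.integral_sub (c4.intervalIntegrable _ _) (c3.intervalIntegrable _ _)]
  -- substitutions
  have hcan : ∀ x : ℝ, x - y + y = x := fun x => by ring
  have hP1 : (∫ x in y..(1/2), x ^ q * (x - y) ^ (q-1))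
      = ∫ u in (0:ℝ)..(1/2 - y), (u + y) ^ q * u ^ (q-1) := by
    have h := intervalIntegral.integral_comp_sub_right (a := y) (b := 1/2)
      (fun u => (u + y) ^ q * u ^ (q-1)) y
    simp only [hcan, sub_self] at h
    exact h
  have hP2 : (∫ x in (0:ℝ)..y, x ^ q * (y - x) ^ (q-1))
      = ∫ u in (0:ℝ)..y, (y - u) ^ q * u ^ (q-1) := by
    have h := intervalIntegral.integral_comp_sub_left (a := 0) (b := y)
      (fun u => (y - u) ^ q * u ^ (q-1)) y
    simp only [sub_sub_cancel, sub_self, sub_zero] at h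
    exact h
  have hP3 : (∫ x in y..(1/2), (1/2 - x) ^ q * (1/2 - x + y) ^ (q-1))
      = ∫ u in y..(1/2), (u - y) ^ q * u ^ (q-1) := by
    have h := intervalIntegral.integral_comp_sub_left (a := y) (b := 1/2)
      (fun u => (u - y) ^ q * u ^ (q-1)) (1/2 + y)
    have e1' : ∀ x : ℝ, 1/2 + y - x - y = 1/2 - x := fun x => by ring
    have e2' : ∀ x : ℝ, 1/2 + y - x = 1/2 - x + y := fun x => by ring
    have e3' : (1:ℝ)/2 + y - 1/2 = y := by ring
    have e4' : (1:ℝ)/2 + y - y = 1/2 := by ring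
    have e5' : ∀ x : ℝ, 1/2 - x + y - y = 1/2 - x := fun x => by ring
    rw [e3', e4'] at h
    simp only [e1', e2', e5'] at h
    exact h
  have hP4 : (∫ x in (0:ℝ)..y, (1/2 - x) ^ q * (1/2 - y + x) ^ (q-1))
      = ∫ u in (1/2 - y)..(1/2), (1 - y - u) ^ q * u ^ (q-1) := by
    have h := intervalIntegral.integral_comp_add_right (a := 0) (b := y)
      (fun u => (1 - y - u) ^ q * u ^ (q-1)) (1/2 - y)
    have e1' : ∀ x : ℝ, 1 - y - (x + (1/2 - y)) = 1/2 - x := fun x => by ring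
    have e2' : ∀ x : ℝ, x + (1/2 - y) = 1/2 - y + x := fun x => by ring
    have e3' : (0:ℝ) + (1/2 - y) = 1/2 - y := by ring
    have e4' : y + (1/2 - y) = 1/2 := by ring
    have e5' : ∀ x : ℝ, 1 - y - (1/2 - y + x) = 1/2 - x := fun x => by ring
    rw [e3', e4'] at h
    simp only [e1', e2', e5'] at h
    exact h
  -- joining into abs and min integrals
  have habs : (∫ u in (0:ℝ)..y, (y - u) ^ q * u ^ (q-1))
      + (∫ u in y..(1/2), (u - y) ^ q * u ^ (q-1))
      = ∫ u in (0:ℝ)..(1/2), |u - y| ^ q * u ^ (q-1) := by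
    rw [show (∫ u in (0:ℝ)..y, (y - u) ^ q * u ^ (q-1))
        = ∫ u in (0:ℝ)..y, |u - y| ^ q * u ^ (q-1) from
      intervalIntegral.integral_congr (fun u hu => by
        rw [uIcc_of_le hy0.le] at hu
        rw [abs_of_nonpos (by linarith [hu.2]), neg_sub]),
      show (∫ u in y..(1/2), (u - y) ^ q * u ^ (q-1))
        = ∫ u in y..(1/2), |u - y| ^ q * u ^ (q-1) from
      intervalIntegral.integral_congr (fun u hu => by
        rw [uIcc_of_le hy2.le] at hu
        rw [abs_of_nonneg (by linarith [hu.1])])]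
    exact intervalIntegral.integral_add_adjacent_intervals
      (cabs.intervalIntegrable _ _) (cabs.intervalIntegrable _ _)
  have hmin : (∫ u in (0:ℝ)..(1/2 - y), (u + y) ^ q * u ^ (q-1))
      + (∫ u in (1/2 - y)..(1/2), (1 - y - u) ^ q * u ^ (q-1))
      = ∫ u in (0:ℝ)..(1/2), (min (u + y) (1 - u - y)) ^ q * u ^ (q-1) := by
    rw [show (∫ u in (0:ℝ)..(1/2 - y), (u + y) ^ q * u ^ (q-1))
        = ∫ u in (0:ℝ)..(1/2 - y), (min (u + y) (1 - u - y)) ^ q * u ^ (q-1) from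
      intervalIntegral.integral_congr (fun u hu => by
        rw [uIcc_of_le (by linarith : (0:ℝ) ≤ 1/2 - y)] at hu
        rw [min_eq_left (by linarith [hu.2])]),
      show (∫ u in (1/2 - y)..(1/2), (1 - y - u) ^ q * u ^ (q-1))
        = ∫ u in (1/2 - y)..(1/2), (min (u + y) (1 - u - y)) ^ q * u ^ (q-1) from
      intervalIntegral.integral_congr (fun u hu => by
        rw [uIcc_of_le (by linarith : (1:ℝ)/2 - y ≤ 1/2)] at hu
        rw [min_eq_right (by linarith [hu.1]),
          show (1:ℝ) - u - y = 1 - y - u by ring])]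
    exact intervalIntegral.integral_add_adjacent_intervals
      (cmin.intervalIntegrable _ _) (cmin.intervalIntegrable _ _)
  -- final positivity
  have hW : (0:ℝ) < ∫ u in (0:ℝ)..(1/2),
      ((min (u + y) (1 - u - y)) ^ q * u ^ (q-1) - |u - y| ^ q * u ^ (q-1)) := by
    refine intervalIntegral.intervalIntegral_pos_of_pos_on
      ((cmin.sub cabs).intervalIntegrable _ _) (fun u hu => ?_) (by norm_num)
    obtain ⟨hu0, hu2⟩ := hu
    have hupow : (0:ℝ) < u ^ (q-1) := Real.rpow_pos_of_pos hu0 _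
    have hlt : |u - y| < min (u + y) (1 - u - y) := by
      refine lt_min ?_ ?_ <;> rw [abs_lt] <;> constructor <;> linarith
    have hlt' : |u - y| ^ q < (min (u + y) (1 - u - y)) ^ q :=
      Real.rpow_lt_rpow (abs_nonneg _) hlt (by linarith)
    have := mul_lt_mul_of_pos_right hlt' hupow
    linarith
  have hWeq : (∫ u in (0:ℝ)..(1/2),
      ((min (u + y) (1 - u - y)) ^ q * u ^ (q-1) - |u - y| ^ q * u ^ (q-1)))
      = (∫ u in (0:ℝ)..(1/2), (min (u + y) (1 - u - y)) ^ q * u ^ (q-1))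
        - ∫ u in (0:ℝ)..(1/2), |u - y| ^ q * u ^ (q-1) :=
    intervalIntegral.integral_sub (cmin.intervalIntegrable _ _) (cabs.intervalIntegrable _ _)
  have hsplit : ∫ x in (0:ℝ)..(1/2), gder q y x
      = (∫ x in (0:ℝ)..y, gder q y x) + ∫ x in y..(1/2), gder q y x :=
    (intervalIntegral.integral_add_adjacent_intervals igder1 igder2).symm
  rw [hsplit, val1, val2, hP1, hP2, hP3, hP4]
  have hq' : (0:ℝ) < q := by linarith
  nlinarith [hW, hWeq, habs, hmin]

lemma Ffun_eq (q : ℝ) : Ffun q = fun y => ∫ x in (0:ℝ)..(1/2), Gf q y x := by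
  funext y
  rw [Ffun, MeasureTheory.integral_Icc_eq_integral_Ioc,
    ← intervalIntegral.integral_of_le (by norm_num : (0:ℝ) ≤ 1/2)]
  rfl

lemma Ffun_cont {q : ℝ} (hq : 1 ≤ q) : ContinuousOn (Ffun q) (Icc (0:ℝ) (1/2)) := by
  have hq0 : (0:ℝ) ≤ q := by linarith
  refine LipschitzOnWith.continuousOn (K := Real.toNNReal (2 * q)) ?_
  rw [lipschitzOnWith_iff_dist_le_mul]
  intro y₁ h₁ y₂ h₂
  have hint : ∀ y : ℝ, IntegrableOn (fun x => Gf q y x) (Icc (0:ℝ) (1/2)) volume :=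
    fun y => (contGx hq0 y).integrableOn_Icc
  have hdiff : Ffun q y₁ - Ffun q y₂ = ∫ x in Icc (0:ℝ) (1/2), (Gf q y₁ x - Gf q y₂ x) := by
    rw [MeasureTheory.integral_sub (hint y₁) (hint y₂)]; rfl
  have hvol : volume (Icc (0:ℝ) (1/2)) < ⊤ := by
    rw [Real.volume_Icc]; exact ENNReal.ofReal_lt_top
  have hb : ‖∫ x in Icc (0:ℝ) (1/2), (Gf q y₁ x - Gf q y₂ x)‖
      ≤ ∫ _x in Icc (0:ℝ) (1/2), (2 * q * |y₁ - y₂|) := by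
    refine MeasureTheory.norm_integral_le_of_norm_le
      (MeasureTheory.integrableOn_const hvol.ne) ?_
    refine (MeasureTheory.ae_restrict_iff' measurableSet_Icc).mpr (.of_forall fun x hx => ?_)
    rw [Real.norm_eq_abs]
    exact Glip hq hx h₁ h₂
  have hc : (∫ _x in Icc (0:ℝ) (1/2), (2 * q * |y₁ - y₂|)) = 1/2 * (2 * q * |y₁ - y₂|) := by
    rw [MeasureTheory.setIntegral_const, Real.volume_real_Icc, smul_eq_mul]
    norm_num
  rw [Real.dist_eq, Real.dist_eq, hdiff]
  calc |∫ x in Icc (0:ℝ) (1/2), (Gf q y₁ x - Gf q y₂ x)|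
      ≤ 1/2 * (2 * q * |y₁ - y₂|) := by rw [← hc]; exact hb
    _ ≤ (Real.toNNReal (2 * q) : ℝ) * |y₁ - y₂| := by
        rw [Real.coe_toNNReal _ (by linarith)]
        nlinarith [abs_nonneg (y₁ - y₂)]

/-- for every real `q ≥ 1`, the function `F` is strictly decreasing on
`[0,1/2]`; in particular its derivative is negative at every `y ∈ (0,1/2)`. -/
theorem Ffun_strictAnti (q : ℝ) (hq : 1 ≤ q) :
    StrictAntiOn (Ffun q) (Set.Icc (0:ℝ) (1/2)) ∧
      ∀ y ∈ Set.Ioo (0:ℝ) (1/2), deriv (Ffun q) y < 0 := by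
  have hderiv : ∀ y ∈ Set.Ioo (0:ℝ) (1/2), deriv (Ffun q) y < 0 := by
    intro y hy
    have h := main_deriv hq hy
    rw [← Ffun_eq q] at h
    rw [h.deriv]
    exact gder_integral_neg hq hy
  refine ⟨strictAntiOn_of_deriv_neg (convex_Icc _ _) (Ffun_cont hq) ?_, hderiv⟩
  rw [interior_Icc]
  exact hderiv

end
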